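/- arXiv:1209.2285 — 5 statements merged into one kernel-verified Lean document; each statement's English description precedes it below -/
import Mathlib

section
/- For ω ∈ [0, π/2] and α, θ ∈ [0,π], φ, β ∈ [0,2π], the quantity 2 sin(ω/2) sin α sin θ [cos(ω/2) cos(φ−β) − sin(ω/2) cos θ sin(φ−β)] is at most sin ω. -/
open Real

lemma eta_aux (s c T C D E sa : ℝ) (hs0 : 0 ≤ s) (hc0 : 0 ≤ c) (hsc : s ≤ c)
    (h1 : s ^ 2 + c ^ 2 = 1) (h2 : T ^ 2 + C ^ 2 = 1) (h3 : D ^ 2 + E ^ 2 = 1)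
    (hT0 : 0 ≤ T) (hT1 : T ≤ 1) (ha0 : 0 ≤ sa) (ha1 : sa ≤ 1) :
    2 * s * sa * T * (c * E - s * C * D) ≤ 2 * s * c := by
  have hB2 : (c * E - s * C * D) ^ 2 ≤ c ^ 2 + s ^ 2 * C ^ 2 := by
    nlinarith [sq_nonneg (c * D + s * C * E), h3]
  have hcs : C ^ 2 = 1 - T ^ 2 := by linarith
  have hT2 : T ^ 2 * (c ^ 2 + s ^ 2 * C ^ 2) ≤ c ^ 2 := by
    rw [hcs]
    have h4 : (1 - T ^ 2) * (c ^ 2 - s ^ 2 * T ^ 2) ≥ 0 := by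
      apply mul_nonneg
      · nlinarith
      · nlinarith [sq_nonneg (s * T)]
    nlinarith [h4]
  have hsq : (T * (c * E - s * C * D)) ^ 2 ≤ c ^ 2 := by
    nlinarith [sq_nonneg (c * E - s * C * D), sq_nonneg T, hB2, hT2,
      mul_le_mul_of_nonneg_left hB2 (sq_nonneg T)]
  have key : T * (c * E - s * C * D) ≤ c := by
    nlinarith [sq_nonneg (T * (c * E - s * C * D) - c), sq_nonneg (T * (c * E - s * C * D) + c)]
  rcases le_or_gt (T * (c * E - s * C * D)) 0 with h | h
  · nlinarith [mul_nonneg hs0 hc0, mul_nonpos_of_nonneg_of_nonpos ha0 h]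
  · nlinarith [mul_nonneg hs0 hc0, key, mul_le_of_le_one_left (le_of_lt h) ha1]

/-- For `ω ∈ [0, π/2]`, `α, θ ∈ [0,π]`, `φ, β ∈ [0,2π]`,
`2 sin(ω/2) sin α sin θ [cos(ω/2) cos(φ−β) − sin(ω/2) cos θ sin(φ−β)] ≤ sin ω`. -/
theorem eta_add_xi_le_sin (α β θ φ ω : ℝ)
    (hα : α ∈ Set.Icc 0 π) (hθ : θ ∈ Set.Icc 0 π) (hω : ω ∈ Set.Icc 0 (π / 2))
    (hβ : β ∈ Set.Icc 0 (2 * π)) (hφ : φ ∈ Set.Icc 0 (2 * π)) :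
    2 * Real.sin (ω / 2) * Real.sin α * Real.sin θ *
        (Real.cos (ω / 2) * Real.cos (φ - β) - Real.sin (ω / 2) * Real.cos θ * Real.sin (φ - β))
      ≤ Real.sin ω := by
  obtain ⟨hω0, hω1⟩ := hω
  have hpi := Real.pi_pos
  have hs0 : 0 ≤ Real.sin (ω / 2) :=
    Real.sin_nonneg_of_nonneg_of_le_pi (by linarith) (by linarith)
  have hc0 : 0 ≤ Real.cos (ω / 2) := Real.cos_nonneg_of_mem_Icc ⟨by linarith, by linarith⟩
  have hsc : Real.sin (ω / 2) ≤ Real.cos (ω / 2) := by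
    rw [← Real.cos_pi_div_two_sub]
    exact Real.cos_le_cos_of_nonneg_of_le_pi (by linarith) (by linarith) (by linarith)
  have hsinω : Real.sin ω = 2 * Real.sin (ω / 2) * Real.cos (ω / 2) := by
    rw [← Real.sin_two_mul]; ring_nf
  rw [hsinω]
  exact eta_aux _ _ _ _ _ _ _ hs0 hc0 hsc (Real.sin_sq_add_cos_sq _)
    (Real.sin_sq_add_cos_sq _) (Real.sin_sq_add_cos_sq _)
    (Real.sin_nonneg_of_nonneg_of_le_pi hθ.1 hθ.2) (Real.sin_le_one θ)
    (Real.sin_nonneg_of_nonneg_of_le_pi hα.1 hα.2) (Real.sin_le_one α)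
end

section
/- Let 0 ≤ d_z ≤ d_y ≤ d_x ≤ π/2 and set a = cos d_z sin d_x, b = cos d_z sin d_y, c = cos d_y sin d_x, g = cos d_y sin d_z, p = cos d_x sin d_y, q = cos d_x sin d_z, h = cos d_y sin d_y. Suppose real numbers λ, μ, γ, η, ν, ξ satisfy λ+γ ≤ 1, ν+μ ≤ 1, λ+μ+γ+η ≤ 2, and λ+μ+γ+η+ν+ξ ≤ 2, with all of λ, μ, γ, η, ν, ξ in [−1,1]. Then λa + μb + γc + ηg + νp + ξq ≤ a + b. -/
open Real

/-- Key lemma: `cos dx * (sin dy - sin dz) ≤ sin (dy - dz)`. -/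
lemma key_ineq (dx dy dz : ℝ) (h0 : 0 ≤ dz) (hzy : dz ≤ dy) (hyx : dy ≤ dx)
    (hx : dx ≤ π / 2) :
    Real.cos dx * (Real.sin dy - Real.sin dz) ≤ Real.sin (dy - dz) := by
  have hpi : (0:ℝ) < π := Real.pi_pos
  have hsub : Real.sin dy - Real.sin dz
      = 2 * Real.sin ((dy - dz) / 2) * Real.cos ((dy + dz) / 2) :=
    Real.sin_sub_sin dy dz
  have hdiff : Real.sin (dy - dz)
      = 2 * Real.sin ((dy - dz) / 2) * Real.cos ((dy - dz) / 2) := by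
    have h := Real.sin_two_mul ((dy - dz) / 2)
    rw [show 2 * ((dy - dz) / 2) = dy - dz by ring] at h
    exact h
  have hA : 0 ≤ Real.sin ((dy - dz) / 2) := by
    apply Real.sin_nonneg_of_nonneg_of_le_pi <;> nlinarith
  have hB : 0 ≤ Real.cos ((dy + dz) / 2) := by
    apply Real.cos_nonneg_of_mem_Icc
    constructor <;> nlinarith
  have hBC : Real.cos ((dy + dz) / 2) ≤ Real.cos ((dy - dz) / 2) := by
    apply Real.cos_le_cos_of_nonneg_of_le_pi <;> nlinarith
  have hc0 : 0 ≤ Real.cos dx := by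
    apply Real.cos_nonneg_of_mem_Icc
    constructor <;> nlinarith
  have hc1 : Real.cos dx ≤ 1 := Real.cos_le_one dx
  rw [hsub, hdiff]
  nlinarith [mul_nonneg hA hB, mul_nonneg hA (sub_nonneg.2 hBC),
    mul_nonneg (mul_nonneg hA hB) (sub_nonneg.2 hc1)]

/-- Proposition 2 of Appendix C (abstracted): under the coefficient constraints,
`λa + μb + γc + ηg + νp + ξq ≤ a + b`. -/
theorem f2_le_a_add_b (dx dy dz lam mu gam eta nu xi : ℝ)
    (h0 : 0 ≤ dz) (hzy : dz ≤ dy) (hyx : dy ≤ dx) (hx : dx ≤ π / 2)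
    (hlam : lam ∈ Set.Icc (-1 : ℝ) 1) (hmu : mu ∈ Set.Icc (-1 : ℝ) 1)
    (hgam : gam ∈ Set.Icc (-1 : ℝ) 1) (heta : eta ∈ Set.Icc (-1 : ℝ) 1)
    (hnu : nu ∈ Set.Icc (-1 : ℝ) 1) (hxi : xi ∈ Set.Icc (-1 : ℝ) 1)
    (h1 : lam + gam ≤ 1) (h2 : nu + mu ≤ 1)
    (h3 : lam + mu + gam + eta ≤ 2)
    (h4 : lam + mu + gam + eta + nu + xi ≤ 2) :
    lam * (Real.cos dz * Real.sin dx) + mu * (Real.cos dz * Real.sin dy)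
      + gam * (Real.cos dy * Real.sin dx) + eta * (Real.cos dy * Real.sin dz)
      + nu * (Real.cos dx * Real.sin dy) + xi * (Real.cos dx * Real.sin dz)
      ≤ Real.cos dz * Real.sin dx + Real.cos dz * Real.sin dy := by
  obtain ⟨hlam1, hlam2⟩ := hlam
  obtain ⟨hmu1, hmu2⟩ := hmu
  obtain ⟨hgam1, hgam2⟩ := hgam
  obtain ⟨heta1, heta2⟩ := heta
  obtain ⟨hnu1, hnu2⟩ := hnu
  obtain ⟨hxi1, hxi2⟩ := hxi
  have hpi : (0:ℝ) < π := Real.pi_pos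
  -- monotonicity facts
  have hsz : 0 ≤ Real.sin dz := Real.sin_nonneg_of_nonneg_of_le_pi h0 (by linarith)
  have hszy : Real.sin dz ≤ Real.sin dy :=
    Real.sin_le_sin_of_le_of_le_pi_div_two (by linarith) (by linarith) hzy
  have hsyx : Real.sin dy ≤ Real.sin dx :=
    Real.sin_le_sin_of_le_of_le_pi_div_two (by linarith) hx hyx
  have hcx : 0 ≤ Real.cos dx :=
    Real.cos_nonneg_of_mem_Icc ⟨by linarith, hx⟩
  have hcxy : Real.cos dx ≤ Real.cos dy :=
    Real.cos_le_cos_of_nonneg_of_le_pi (by linarith) (by linarith) hyx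
  have hcyz : Real.cos dy ≤ Real.cos dz :=
    Real.cos_le_cos_of_nonneg_of_le_pi h0 (by linarith) hzy
  -- the nontrivial bound:  b - g - p + q ≥ 0
  have hkey : Real.cos dx * (Real.sin dy - Real.sin dz) ≤ Real.sin (dy - dz) :=
    key_ineq dx dy dz h0 hzy hyx hx
  have hsin_sub : Real.sin (dy - dz)
      = Real.sin dy * Real.cos dz - Real.cos dy * Real.sin dz := Real.sin_sub dy dz
  have hbgpq : 0 ≤ Real.cos dz * Real.sin dy - Real.cos dy * Real.sin dz
      - Real.cos dx * Real.sin dy + Real.cos dx * Real.sin dz := by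
    rw [hsin_sub] at hkey; linarith
  -- slack products (dual certificate)
  have P1 : 0 ≤ (Real.cos dy * Real.sin dx - Real.cos dy * Real.sin dz) * (1 - lam - gam) :=
    mul_nonneg (by nlinarith) (by linarith)
  have P2 : 0 ≤ (Real.cos dx * Real.sin dy - Real.cos dx * Real.sin dz) * (1 - nu - mu) :=
    mul_nonneg (by nlinarith) (by linarith)
  have P3 : 0 ≤ (Real.cos dy * Real.sin dz - Real.cos dx * Real.sin dz)
      * (2 - lam - mu - gam - eta) :=
    mul_nonneg (by nlinarith) (by linarith)
  have P4 : 0 ≤ (Real.cos dx * Real.sin dz) * (2 - lam - mu - gam - eta - nu - xi) :=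
    mul_nonneg (mul_nonneg hcx hsz) (by linarith)
  have P5 : 0 ≤ (Real.cos dz * Real.sin dx - Real.cos dy * Real.sin dx) * (1 - lam) :=
    mul_nonneg (by nlinarith) (by linarith)
  have P6 : 0 ≤ (Real.cos dz * Real.sin dy - Real.cos dy * Real.sin dz
      - Real.cos dx * Real.sin dy + Real.cos dx * Real.sin dz) * (1 - mu) :=
    mul_nonneg hbgpq (by linarith)
  linarith [P1, P2, P3, P4, P5, P6]
end

section
/- Let 0 ≤ d_z ≤ d_y ≤ d_x ≤ π/2, let S ∈ SO(3) with entries S_l^n and columns forming a right-handed orthonormal frame, and let T ∈ ℝ³ be a unit vector. Define f₁ = sin d_y sin d_z S_x^x + sin d_z sin d_x S_y^y + sin d_x sin d_y S_z^z. Then f₁ ≤ sin d_x sin d_y + (sin d_x + sin d_y) sin d_z. -/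
open Matrix Real

/-- The diagonal part `f₁` of the QST objective satisfies
`f₁ ≤ sin d_x sin d_y + (sin d_x + sin d_y) sin d_z`. -/
theorem f1_le_max (dx dy dz : ℝ)
    (h0 : 0 ≤ dz) (hzy : dz ≤ dy) (hyx : dy ≤ dx) (hx : dx ≤ π / 2)
    (S : Matrix (Fin 3) (Fin 3) ℝ) (hS : S ∈ specialOrthogonalGroup (Fin 3) ℝ)
    (T : Fin 3 → ℝ) (hT : ∑ i, T i ^ 2 = 1) :
    Real.sin dy * Real.sin dz * S 0 0 + Real.sin dz * Real.sin dx * S 1 1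
        + Real.sin dx * Real.sin dy * S 2 2
      ≤ Real.sin dx * Real.sin dy + (Real.sin dx + Real.sin dy) * Real.sin dz := by
  obtain ⟨horth, -⟩ := (Matrix.mem_specialOrthogonalGroup_iff).mp hS
  rw [Matrix.mem_orthogonalGroup_iff] at horth
  have hrow : ∀ i : Fin 3, S i 0 * S i 0 + S i 1 * S i 1 + S i 2 * S i 2 = 1 := by
    intro i
    have := congrFun (congrFun horth i) i
    simpa [Matrix.mul_apply, Fin.sum_univ_three] using this
  have hd0 : S 0 0 ≤ 1 := by
    nlinarith [hrow 0, sq_nonneg (S 0 1), sq_nonneg (S 0 2), sq_nonneg (S 0 0 + 1)]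
  have hd1 : S 1 1 ≤ 1 := by
    nlinarith [hrow 1, sq_nonneg (S 1 0), sq_nonneg (S 1 2), sq_nonneg (S 1 1 + 1)]
  have hd2 : S 2 2 ≤ 1 := by
    nlinarith [hrow 2, sq_nonneg (S 2 0), sq_nonneg (S 2 1), sq_nonneg (S 2 2 + 1)]
  have hszn : 0 ≤ Real.sin dz := Real.sin_nonneg_of_nonneg_of_le_pi h0 (by linarith [Real.pi_pos])
  have hsyn : 0 ≤ Real.sin dy :=
    Real.sin_nonneg_of_nonneg_of_le_pi (by linarith) (by linarith [Real.pi_pos])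
  have hsxn : 0 ≤ Real.sin dx :=
    Real.sin_nonneg_of_nonneg_of_le_pi (by linarith) (by linarith [Real.pi_pos])
  nlinarith [mul_nonneg hsyn hszn, mul_nonneg hszn hsxn, mul_nonneg hsxn hsyn]
end

section
/- For d_x = π/2, d_y = d_z = 0, the maximum over S ∈ SO(3) and unit vectors T of T^x S_z^x + T^y S_z^y is 1, and hence the QST power of the CNOT gate, given by 1/2 + (max)/6, equals 2/3. -/
open Matrix Real

/-- For `d_x = π/2`, `d_y = d_z = 0`, the maximum over `S ∈ SO(3)` and unit `T` of
`T^x S_z^x + T^y S_z^y` is `1`, hence the QST power of the CNOT gate,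
`1/2 + (max)/6`, equals `2/3`. -/
theorem qst_power_CNOT :
    IsGreatest {x : ℝ | ∃ S ∈ specialOrthogonalGroup (Fin 3) ℝ, ∃ T : Fin 3 → ℝ,
        (∑ i, T i ^ 2 = 1) ∧ x = T 0 * S 2 0 + T 1 * S 2 1} 1 ∧
    (1 / 2 : ℝ) + sSup {x : ℝ | ∃ S ∈ specialOrthogonalGroup (Fin 3) ℝ, ∃ T : Fin 3 → ℝ,
        (∑ i, T i ^ 2 = 1) ∧ x = T 0 * S 2 0 + T 1 * S 2 1} / 6 = 2 / 3 := by
  have hgreat : IsGreatest {x : ℝ | ∃ S ∈ specialOrthogonalGroup (Fin 3) ℝ, ∃ T : Fin 3 → ℝ,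
      (∑ i, T i ^ 2 = 1) ∧ x = T 0 * S 2 0 + T 1 * S 2 1} 1 := by
    constructor
    · -- membership: cyclic permutation matrix, T = e_x
      refine ⟨Matrix.of ![![0,1,0],![0,0,1],![1,0,0]], ?_, ![1,0,0], ?_, by simp [Matrix.cons_val]⟩
      · rw [mem_specialOrthogonalGroup_iff]
        constructor
        · rw [mem_orthogonalGroup_iff]
          ext i j
          fin_cases i <;> fin_cases j <;>
            simp [Matrix.mul_apply, Fin.sum_univ_three, star, Matrix.one_apply]
        · simp [Matrix.det_fin_three]
      · simp [Fin.sum_univ_three]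
    · rintro x ⟨S, hS, T, hT, rfl⟩
      have horth := (mem_specialOrthogonalGroup_iff.mp hS).1
      rw [mem_orthogonalGroup_iff] at horth
      have hrow : S 2 0 ^ 2 + S 2 1 ^ 2 + S 2 2 ^ 2 = 1 := by
        have := congrFun (congrFun horth 2) 2
        simpa [Matrix.mul_apply, Fin.sum_univ_three, star, Matrix.one_apply, sq,
          Matrix.transpose_apply] using this
      rw [Fin.sum_univ_three] at hT
      nlinarith [sq_nonneg (T 0 - S 2 0), sq_nonneg (T 1 - S 2 1), sq_nonneg (T 2),
        sq_nonneg (S 2 2)]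
  refine ⟨hgreat, ?_⟩
  rw [hgreat.csSup_eq]
  norm_num
end

section
/- If ω ∈ [0, π/2] and θ ∈ [0, π], then 2 sin(ω/2) sin θ √(cos²(ω/2) + sin²(ω/2) cos²θ) ≤ sin ω. -/
open Real

/-- If `ω ∈ [0, π/2]` and `θ ∈ [0, π]`, then
`2 sin(ω/2) sin θ √(cos²(ω/2) + sin²(ω/2) cos²θ) ≤ sin ω`. -/
theorem sqrt_bound (ω θ : ℝ) (hω : ω ∈ Set.Icc 0 (π / 2)) (hθ : θ ∈ Set.Icc 0 π) :
    2 * Real.sin (ω / 2) * Real.sin θ *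
        Real.sqrt (Real.cos (ω / 2) ^ 2 + Real.sin (ω / 2) ^ 2 * Real.cos θ ^ 2)
      ≤ Real.sin ω := by
  obtain ⟨hω0, hω1⟩ := hω
  obtain ⟨hθ0, hθ1⟩ := hθ
  have hpi := Real.pi_pos
  have hs0 : 0 ≤ Real.sin (ω / 2) := Real.sin_nonneg_of_nonneg_of_le_pi (by linarith) (by linarith)
  have hc0 : 0 ≤ Real.cos (ω / 2) := Real.cos_nonneg_of_mem_Icc ⟨by linarith, by linarith⟩
  have hsθ : 0 ≤ Real.sin θ := Real.sin_nonneg_of_nonneg_of_le_pi hθ0 hθ1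
  have hsc : Real.sin (ω / 2) ≤ Real.cos (ω / 2) := by
    rw [← Real.sin_pi_div_two_sub]
    apply Real.strictMonoOn_sin.monotoneOn ⟨by linarith, by linarith⟩
      ⟨by linarith, by linarith⟩ (by linarith)
  have hpyth := Real.sin_sq_add_cos_sq (ω / 2)
  have hpythθ := Real.sin_sq_add_cos_sq θ
  set A : ℝ := Real.cos (ω / 2) ^ 2 + Real.sin (ω / 2) ^ 2 * Real.cos θ ^ 2 with hA
  have hA0 : 0 ≤ A := by positivity
  have key : Real.sin θ * Real.sqrt A ≤ Real.cos (ω / 2) := by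
    have h1 : Real.sin θ * Real.sqrt A = Real.sqrt (Real.sin θ ^ 2 * A) := by
      rw [Real.sqrt_mul (by positivity), Real.sqrt_sq hsθ]
    have hu1 : Real.sin θ ^ 2 ≤ 1 := by nlinarith [sq_nonneg (Real.cos θ)]
    have hss : Real.sin (ω / 2) ^ 2 ≤ Real.cos (ω / 2) ^ 2 := by nlinarith
    have hss2 : Real.sin (ω / 2) ^ 2 * Real.sin θ ^ 2 ≤ Real.cos (ω / 2) ^ 2 := by
      nlinarith [sq_nonneg (Real.sin (ω / 2))]
    have h2 : Real.sin θ ^ 2 * A ≤ Real.cos (ω / 2) ^ 2 := by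
      nlinarith [mul_nonneg (by linarith : (0:ℝ) ≤ 1 - Real.sin θ ^ 2)
        (by linarith : (0:ℝ) ≤ Real.cos (ω / 2) ^ 2 - Real.sin (ω / 2) ^ 2 * Real.sin θ ^ 2)]
    calc Real.sin θ * Real.sqrt A = Real.sqrt (Real.sin θ ^ 2 * A) := h1
      _ ≤ Real.sqrt (Real.cos (ω / 2) ^ 2) := Real.sqrt_le_sqrt h2
      _ = Real.cos (ω / 2) := by rw [Real.sqrt_sq hc0]
  have hsin : Real.sin ω = 2 * Real.sin (ω / 2) * Real.cos (ω / 2) := by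
    have h := Real.sin_two_mul (ω / 2)
    rw [show 2 * (ω / 2) = ω by ring] at h
    exact h
  rw [hsin]
  have h2s : 0 ≤ 2 * Real.sin (ω / 2) := by linarith
  calc 2 * Real.sin (ω / 2) * Real.sin θ * Real.sqrt A
      = 2 * Real.sin (ω / 2) * (Real.sin θ * Real.sqrt A) := by ring
    _ ≤ 2 * Real.sin (ω / 2) * Real.cos (ω / 2) := by
        exact mul_le_mul_of_nonneg_left key h2s
end
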